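/- Let J be a symmetric positive definite d×d real matrix with eigendecomposition J = Zᵀ D Z (Z orthogonal, D diagonal positive). Then the matrix exponential exp(t·[[0, I],[−J, 0]]) equals [[Zᵀ,0],[0,Zᵀ]]·[[cos(t√D), D^(−1/2) sin(t√D)],[−D^(1/2) sin(t√D), cos(t√D)]]·[[Z,0],[0,Z]], where functions of √D act entrywise on the diagonal. -/

import Mathlib

open Matrix Real NormedSpace

noncomputable def cplxToReal (d : ℕ) :
    Matrix (Fin d) (Fin d) ℂ →+* Matrix (Fin d ⊕ Fin d) (Fin d ⊕ Fin d) ℝ where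
  toFun M := Matrix.fromBlocks (M.map Complex.re) (M.map Complex.im)
      (-(M.map Complex.im)) (M.map Complex.re)
  map_one' := by
    ext (i | i) (j | j) <;>
      simp [Matrix.one_apply, Matrix.map_apply, apply_ite Complex.re, apply_ite Complex.im]
  map_mul' M N := by
    ext (i | i) (j | j) <;>
      simp [Matrix.mul_apply, Matrix.map_apply, Fintype.sum_sum_type, Complex.mul_re,
        Complex.mul_im, Finset.sum_add_distrib, Finset.sum_sub_distrib, Complex.re_sum,
        Complex.im_sum] <;> ring
  map_zero' := by
    ext (i | i) (j | j) <;> simp [Matrix.map_apply] <;> ring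
  map_add' M N := by
    ext (i | i) (j | j) <;> simp [Matrix.map_apply] <;> ring

lemma cplxToReal_continuous (d : ℕ) : Continuous (cplxToReal d) := by
  apply continuous_matrix
  rintro (i | i) (j | j)
  · exact Complex.continuous_re.comp (continuous_id.matrix_elem _ _)
  · exact Complex.continuous_im.comp (continuous_id.matrix_elem _ _)
  · exact (Complex.continuous_im.comp (continuous_id.matrix_elem _ _)).neg
  · exact Complex.continuous_re.comp (continuous_id.matrix_elem _ _)

lemma exp_cplxToReal (d : ℕ) (M : Matrix (Fin d) (Fin d) ℂ) :
    NormedSpace.exp (cplxToReal d M) = cplxToReal d (NormedSpace.exp M) := by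
  letI : SeminormedRing (Matrix (Fin d) (Fin d) ℂ) := Matrix.linftyOpSemiNormedRing
  letI : NormedRing (Matrix (Fin d) (Fin d) ℂ) := Matrix.linftyOpNormedRing
  letI : NormedAlgebra ℝ (Matrix (Fin d) (Fin d) ℂ) := Matrix.linftyOpNormedAlgebra
  letI : SeminormedRing (Matrix (Fin d ⊕ Fin d) (Fin d ⊕ Fin d) ℝ) :=
    Matrix.linftyOpSemiNormedRing
  letI : NormedRing (Matrix (Fin d ⊕ Fin d) (Fin d ⊕ Fin d) ℝ) := Matrix.linftyOpNormedRing
  letI : NormedAlgebra ℝ (Matrix (Fin d ⊕ Fin d) (Fin d ⊕ Fin d) ℝ) :=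
    Matrix.linftyOpNormedAlgebra
  letI : NormedAlgebra ℚ (Matrix (Fin d) (Fin d) ℂ) := NormedAlgebra.restrictScalars ℚ ℝ _
  exact (map_exp (cplxToReal d) (cplxToReal_continuous d) M).symm

lemma exp_rot (d : ℕ) (v : Fin d → ℝ) :
    NormedSpace.exp (Matrix.fromBlocks (0 : Matrix (Fin d) (Fin d) ℝ) (Matrix.diagonal v)
        (-(Matrix.diagonal v)) 0) =
      Matrix.fromBlocks (Matrix.diagonal fun i => Real.cos (v i))
        (Matrix.diagonal fun i => Real.sin (v i))
        (-(Matrix.diagonal fun i => Real.sin (v i)))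
        (Matrix.diagonal fun i => Real.cos (v i)) := by
  have h1 : (Matrix.fromBlocks (0 : Matrix (Fin d) (Fin d) ℝ) (Matrix.diagonal v)
      (-(Matrix.diagonal v)) 0)
      = cplxToReal d (Matrix.diagonal fun i => (v i : ℂ) * Complex.I) := by
    show _ = Matrix.fromBlocks _ _ _ _
    rw [Matrix.diagonal_map (by simp), Matrix.diagonal_map (by simp)]
    simp
  rw [h1, exp_cplxToReal, Matrix.exp_diagonal]
  have h2 : NormedSpace.exp (fun i => (v i : ℂ) * Complex.I)
      = fun i => Complex.cos (v i) + Complex.sin (v i) * Complex.I := by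
    funext i
    rw [Pi.coe_exp, ← Complex.exp_mul_I]
    rw [show (NormedSpace.exp : ℂ → ℂ) = Complex.exp by
      rw [Complex.exp_eq_exp_ℂ]]
  rw [h2]
  show Matrix.fromBlocks _ _ _ _ = _
  rw [Matrix.diagonal_map (by simp), Matrix.diagonal_map (by simp)]
  simp [Complex.cos_ofReal_re, Complex.sin_ofReal_re]

/-- For a symmetric positive definite `J = Zᵀ D Z` (with `Z` orthogonal and
`D = diagonal dvec` with positive diagonal entries), the matrix exponential of
`t·[[0, I],[-J, 0]]` equals
`[[Zᵀ,0],[0,Zᵀ]]·[[cos(t√D), D^(-1/2) sin(t√D)],[-D^(1/2) sin(t√D), cos(t√D)]]·[[Z,0],[0,Z]]`,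
with functions of `√D` acting entrywise on the diagonal. -/
theorem stmt18 (d : ℕ) (t : ℝ)
    (Z D J : Matrix (Fin d) (Fin d) ℝ) (dvec : Fin d → ℝ)
    (hdvec : ∀ i, 0 < dvec i) (hD : D = Matrix.diagonal dvec)
    (hZ : Zᵀ * Z = 1) (hJ : J = Zᵀ * D * Z) (hJsymm : J.IsSymm) :
    NormedSpace.exp (t • Matrix.fromBlocks (0 : Matrix (Fin d) (Fin d) ℝ) 1 (-J) 0) =
      Matrix.fromBlocks Zᵀ 0 0 Zᵀ *
        Matrix.fromBlocks
          (Matrix.diagonal fun i => Real.cos (t * Real.sqrt (dvec i)))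
          (Matrix.diagonal fun i => Real.sin (t * Real.sqrt (dvec i)) / Real.sqrt (dvec i))
          (Matrix.diagonal fun i => -(Real.sqrt (dvec i) * Real.sin (t * Real.sqrt (dvec i))))
          (Matrix.diagonal fun i => Real.cos (t * Real.sqrt (dvec i))) *
        Matrix.fromBlocks Z 0 0 Z := by
  subst hD hJ
  set s : Fin d → ℝ := fun i => Real.sqrt (dvec i) with hs
  have hs0 : ∀ i, s i ≠ 0 := fun i => ne_of_gt (Real.sqrt_pos.mpr (hdvec i))
  have hs2 : ∀ i, s i * s i = dvec i := fun i => Real.mul_self_sqrt (hdvec i).le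
  have hZZT : Z * Zᵀ = 1 := mul_eq_one_comm.mp hZ
  set V := Matrix.fromBlocks Zᵀ 0 0 Zᵀ with hV
  set W := Matrix.fromBlocks Z 0 0 Z with hW
  have hVW : V * W = 1 := by
    rw [hV, hW, Matrix.fromBlocks_multiply]
    simp [hZ]
  have hWV : W * V = 1 := mul_eq_one_comm.mp hVW
  have hUnitV : IsUnit V := ⟨⟨V, W, hVW, hWV⟩, rfl⟩
  have hVinv : V⁻¹ = W := Matrix.inv_eq_right_inv hVW
  set R := Matrix.fromBlocks (1 : Matrix (Fin d) (Fin d) ℝ) 0 0 (Matrix.diagonal s) with hR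
  set R' := Matrix.fromBlocks (1 : Matrix (Fin d) (Fin d) ℝ) 0 0
    (Matrix.diagonal fun i => (s i)⁻¹) with hR'
  have hss : Matrix.diagonal s * Matrix.diagonal (fun i => (s i)⁻¹) = 1 := by
    rw [Matrix.diagonal_mul_diagonal]
    ext i j
    by_cases h : i = j <;>
      simp [Matrix.diagonal_apply, Matrix.one_apply, h, mul_inv_cancel₀ (hs0 _)]
  have hRR' : R * R' = 1 := by
    rw [hR, hR', Matrix.fromBlocks_multiply]
    simp [hss]
  have hR'R : R' * R = 1 := mul_eq_one_comm.mp hRR'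
  have hUnitR : IsUnit R := ⟨⟨R, R', hRR', hR'R⟩, rfl⟩
  have hRinv : R⁻¹ = R' := Matrix.inv_eq_right_inv hRR'
  set K := Matrix.fromBlocks (0 : Matrix (Fin d) (Fin d) ℝ)
    (Matrix.diagonal fun i => t * s i) (-(Matrix.diagonal fun i => t * s i)) 0 with hK
  have hd1 : (Matrix.diagonal fun i => t * s i) * (Matrix.diagonal fun i => (s i)⁻¹)
      = t • (1 : Matrix (Fin d) (Fin d) ℝ) := by
    rw [Matrix.diagonal_mul_diagonal]
    ext i j
    rcases eq_or_ne i j with h | h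
    · subst h
      simp [Matrix.diagonal_apply_eq, Matrix.one_apply, mul_assoc, mul_inv_cancel₀ (hs0 _)]
    · simp [Matrix.diagonal_apply_ne _ h, Matrix.one_apply, h]
  have hd2 : (Matrix.diagonal s) * (Matrix.diagonal fun i => t * s i)
      = t • Matrix.diagonal dvec := by
    rw [Matrix.diagonal_mul_diagonal]
    ext i j
    rcases eq_or_ne i j with h | h
    · subst h
      simp only [Matrix.diagonal_apply_eq, Matrix.smul_apply, smul_eq_mul]
      rw [← hs2 i]; ring
    · simp [Matrix.diagonal_apply_ne _ h, h]
  have hmid : R * K * R⁻¹ = Matrix.fromBlocks 0 (t • (1 : Matrix (Fin d) (Fin d) ℝ))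
      (-(t • Matrix.diagonal dvec)) 0 := by
    have hd2' : (Matrix.diagonal fun i => -(s i * (t * s i))) = -(t • Matrix.diagonal dvec) := by
      rw [← hd2, Matrix.diagonal_mul_diagonal, Matrix.diagonal_neg]
    rw [hRinv, hR, hR', hK, Matrix.fromBlocks_multiply, Matrix.fromBlocks_multiply]
    simp [hd1, hd2']
  have key : t • Matrix.fromBlocks (0 : Matrix (Fin d) (Fin d) ℝ) 1
        (-(Zᵀ * Matrix.diagonal dvec * Z)) 0
      = V * (R * K * R⁻¹) * V⁻¹ := by
    rw [hmid, hVinv, hV, hW, Matrix.fromBlocks_multiply, Matrix.fromBlocks_multiply,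
      Matrix.fromBlocks_smul]
    simp [Matrix.mul_smul, Matrix.smul_mul, hZ, Matrix.mul_assoc]
  rw [key, Matrix.exp_conj V _ hUnitV, Matrix.exp_conj R _ hUnitR, hK,
    exp_rot d (fun i => t * s i), hVinv, hRinv, hR, hR']
  congr 1
  congr 1
  rw [Matrix.fromBlocks_multiply, Matrix.fromBlocks_multiply]
  have hb12 : (Matrix.diagonal fun i => Real.sin (t * s i)) * (Matrix.diagonal fun i => (s i)⁻¹)
      = Matrix.diagonal fun i => Real.sin (t * s i) / s i := by
    rw [Matrix.diagonal_mul_diagonal]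
    have h : (fun i => Real.sin (t * s i) * (s i)⁻¹) = fun i => Real.sin (t * s i) / s i :=
      funext fun i => (div_eq_mul_inv _ _).symm
    rw [h]
  have hb21 : (Matrix.diagonal s) * (Matrix.diagonal fun i => Real.sin (t * s i))
      = Matrix.diagonal fun i => s i * Real.sin (t * s i) := by
    rw [Matrix.diagonal_mul_diagonal]
  have hb22 : (Matrix.diagonal s) * (Matrix.diagonal fun i => Real.cos (t * s i))
        * (Matrix.diagonal fun i => (s i)⁻¹)
      = Matrix.diagonal fun i => Real.cos (t * s i) := by
    rw [Matrix.diagonal_mul_diagonal, Matrix.diagonal_mul_diagonal]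
    have h : (fun i => s i * Real.cos (t * s i) * (s i)⁻¹) = fun i => Real.cos (t * s i) :=
      funext fun i => by rw [mul_right_comm, mul_inv_cancel₀ (hs0 i), one_mul]
    rw [h]
  simp only [Matrix.one_mul, Matrix.mul_one, Matrix.zero_mul, Matrix.mul_zero, zero_add,
    add_zero, Matrix.mul_neg, Matrix.neg_mul, hb12, hb21, ← Matrix.mul_assoc, hb22, neg_zero,
    Matrix.diagonal_neg]
  simp [hs]
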